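/- Let H > 0. For C > 2(H + √(1+H²)) define F(C) = ∫₀^{π} (1/C + H·(−q₂(C)·cos t − q₁(C))) / ((1 + q₁(C) + q₂(C)·cos t)·√(−q₂(C)·cos t − q₁(C))·√(1+H²)) dt, where q₁(C) = (2H − C)/(2C(1+H²)) and q₂(C) = √(C² − 4CH − 4)/(2C(1+H²)). Then F(C) tends to 2·arccot(H) = π − 2·arctan(H) as C → ∞. -/

import Mathlib

open Real Filter MeasureTheory intervalIntegral


noncomputable def itg (H C t : ℝ) : ℝ :=
  (1 / C + H * (-(Real.sqrt (C ^ 2 - 4 * C * H - 4) / (2 * C * (1 + H ^ 2))) * Real.cos t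
    - (2 * H - C) / (2 * C * (1 + H ^ 2))))
  / ((1 + (2 * H - C) / (2 * C * (1 + H ^ 2))
      + (Real.sqrt (C ^ 2 - 4 * C * H - 4) / (2 * C * (1 + H ^ 2))) * Real.cos t)
    * Real.sqrt (-(Real.sqrt (C ^ 2 - 4 * C * H - 4) / (2 * C * (1 + H ^ 2))) * Real.cos t
      - (2 * H - C) / (2 * C * (1 + H ^ 2)))
    * Real.sqrt (1 + H ^ 2))

lemma itg_bound (H C t : ℝ) (hH : 0 < H) (hC : 2 * (H + Real.sqrt (1 + H ^ 2)) < C) :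
    |itg H C t| ≤ Real.sqrt (1 + H ^ 2) / H ^ 2 + 1 / H := by
  set a : ℝ := 1 + H ^ 2 with ha_def
  have ha : 0 < a := by positivity
  have hsa : 0 < Real.sqrt a := Real.sqrt_pos.2 ha
  have hsa2 : Real.sqrt a ^ 2 = a := Real.sq_sqrt ha.le
  have h1 : Real.sqrt a * Real.sqrt a = a := Real.mul_self_sqrt ha.le
  have hC0 : (0 : ℝ) < C := lt_trans (by positivity) hC
  have hC2H : 2 * Real.sqrt a < C - 2 * H := by linarith
  have hdisc : 0 < C ^ 2 - 4 * C * H - 4 := by nlinarith [hsa2, hsa]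
  set q : ℝ := Real.sqrt (C ^ 2 - 4 * C * H - 4) with hq_def
  have hq0 : 0 ≤ q := Real.sqrt_nonneg _
  have hq2 : q ^ 2 = C ^ 2 - 4 * C * H - 4 := Real.sq_sqrt hdisc.le
  set D : ℝ := -(q / (2 * C * a)) * Real.cos t - (2 * H - C) / (2 * C * a) with hD_def
  set L : ℝ := 1 + (2 * H - C) / (2 * C * a) + (q / (2 * C * a)) * Real.cos t with hL_def
  have hitg : itg H C t = (1 / C + H * D) / (L * Real.sqrt D * Real.sqrt a) := rfl
  clear_value a q D L
  subst ha_def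
  set a : ℝ := 1 + H ^ 2 with ha_def
  have hqlt : q < C - 2 * H := by nlinarith
  have hqC : q < C := by nlinarith
  have hcos1 : Real.cos t ≤ 1 := Real.cos_le_one t
  have hcos2 : -1 ≤ Real.cos t := Real.neg_one_le_cos t
  have hqc1 : q * Real.cos t ≤ q := by nlinarith
  have hqc2 : -q ≤ q * Real.cos t := by nlinarith
  have hDeq : D = (C - 2 * H - q * Real.cos t) / (2 * C * a) := by rw [hD_def]; ring
  have hkey : 2 * a ≤ (C - 2 * H - q) * C := by nlinarith
  have hDlb : 1 / C ^ 2 ≤ D := by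
    rw [hDeq, div_le_div_iff₀ (by positivity) (by positivity)]
    have h2 := mul_le_mul_of_nonneg_right hkey hC0.le
    have h3 := mul_le_mul_of_nonneg_right
      (show C - 2*H - q ≤ C - 2*H - q*Real.cos t by linarith) (by positivity : (0:ℝ) ≤ C^2)
    linarith [h2, h3]
  have hD0 : 0 < D := lt_of_lt_of_le (by positivity) hDlb
  have hDub : D ≤ 1 / a := by
    rw [hDeq, div_le_div_iff₀ (by positivity) ha]
    have hub : C - 2*H - q*Real.cos t ≤ 2*C := by linarith
    linarith [mul_le_mul_of_nonneg_right hub ha.le]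
  have hca : 2 * C * a = 2 * C + 2 * C * H ^ 2 := by rw [ha_def]; ring
  have hnum : 2 * C * H ^ 2 ≤ 2 * C * a + (2 * H - C) + q * Real.cos t := by
    linarith [hqc2, hqC, hca, hH]
  have hLeq : L = (2 * C * a + (2 * H - C) + q * Real.cos t) / (2 * C * a) := by
    rw [hL_def]; field_simp
  have hLlb : H ^ 2 / a ≤ L := by
    rw [hLeq, div_le_div_iff₀ ha (by positivity)]
    linarith [mul_le_mul_of_nonneg_right hnum ha.le]
  have hL0 : 0 < L := lt_of_lt_of_le (by positivity) hLlb
  have hsD0 : 0 < Real.sqrt D := Real.sqrt_pos.2 hD0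
  have hsDlb : 1 / C ≤ Real.sqrt D := by
    rw [Real.le_sqrt (by positivity) hD0.le, div_pow, one_pow]
    exact hDlb
  have hsDub : Real.sqrt D ≤ 1 / Real.sqrt a := by
    have h2 : Real.sqrt D ≤ Real.sqrt (1 / a) := Real.sqrt_le_sqrt hDub
    rwa [one_div, Real.sqrt_inv, ← one_div] at h2
  have hden0 : 0 < L * Real.sqrt D * Real.sqrt a := by positivity
  have hN0 : 0 ≤ 1 / C + H * D := by positivity
  rw [hitg, abs_of_nonneg (div_nonneg hN0 hden0.le), div_le_iff₀ hden0]
  have hDmul : D = Real.sqrt D * Real.sqrt D := (Real.mul_self_sqrt hD0.le).symm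
  have e2 : H * D ≤ H * Real.sqrt D / Real.sqrt a := by
    calc H * D = H * (Real.sqrt D * Real.sqrt D) := by rw [← hDmul]
      _ ≤ H * (Real.sqrt D * (1 / Real.sqrt a)) := by
          exact mul_le_mul_of_nonneg_left (mul_le_mul_of_nonneg_left hsDub hsD0.le) hH.le
      _ = H * Real.sqrt D / Real.sqrt a := by ring
  have e4 : (Real.sqrt a / H ^ 2 + 1 / H) * (H ^ 2 / a * Real.sqrt D * Real.sqrt a)
      = Real.sqrt D + H * Real.sqrt D / Real.sqrt a := by
    have h' : Real.sqrt (1 + H ^ 2) ^ 2 = 1 + H ^ 2 := Real.sq_sqrt (by positivity)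
    rw [← h1]
    field_simp
    rw [Real.sqrt_sq hsa.le]
  have e5 : (Real.sqrt a / H ^ 2 + 1 / H) * (H ^ 2 / a * Real.sqrt D * Real.sqrt a)
      ≤ (Real.sqrt a / H ^ 2 + 1 / H) * (L * Real.sqrt D * Real.sqrt a) := by
    apply mul_le_mul_of_nonneg_left _ (by positivity)
    apply mul_le_mul_of_nonneg_right _ hsa.le
    exact mul_le_mul_of_nonneg_right hLlb hsD0.le
  calc 1 / C + H * D ≤ Real.sqrt D + H * Real.sqrt D / Real.sqrt a := add_le_add hsDlb e2
    _ = (Real.sqrt a / H ^ 2 + 1 / H) * (H ^ 2 / a * Real.sqrt D * Real.sqrt a) := e4.symm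
    _ ≤ _ := e5

lemma q1_tendsto (H : ℝ) (hH : 0 < H) :
    Tendsto (fun C : ℝ => (2 * H - C) / (2 * C * (1 + H ^ 2))) atTop
      (nhds (-(1 / (2 * (1 + H ^ 2))))) := by
  have ha : (0:ℝ) < 1 + H ^ 2 := by positivity
  have heq : ∀ᶠ C : ℝ in atTop, (2 * H / C - 1) / (2 * (1 + H ^ 2))
      = (2 * H - C) / (2 * C * (1 + H ^ 2)) := by
    filter_upwards [eventually_gt_atTop (0:ℝ)] with C hC0
    rw [div_eq_div_iff (by positivity) (by positivity)]
    field_simp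
  have h1 : Tendsto (fun C : ℝ => (2 * H / C - 1) / (2 * (1 + H ^ 2))) atTop
      (nhds ((0 - 1) / (2 * (1 + H ^ 2)))) :=
    ((Tendsto.div_atTop tendsto_const_nhds tendsto_id).sub_const 1).div_const _
  have h2 : (0 - 1 : ℝ) / (2 * (1 + H ^ 2)) = -(1 / (2 * (1 + H ^ 2))) := by ring
  rw [h2] at h1
  exact h1.congr' heq

lemma q2_tendsto (H : ℝ) (hH : 0 < H) :
    Tendsto (fun C : ℝ => Real.sqrt (C ^ 2 - 4 * C * H - 4) / (2 * C * (1 + H ^ 2))) atTop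
      (nhds (1 / (2 * (1 + H ^ 2)))) := by
  have ha : (0:ℝ) < 1 + H ^ 2 := by positivity
  have heq : ∀ᶠ C : ℝ in atTop,
      Real.sqrt (1 - 4 * H / C - 4 / C ^ 2) / (2 * (1 + H ^ 2))
        = Real.sqrt (C ^ 2 - 4 * C * H - 4) / (2 * C * (1 + H ^ 2)) := by
    filter_upwards [eventually_gt_atTop (0:ℝ),
        eventually_gt_atTop (2 * (H + Real.sqrt (1 + H ^ 2)))] with C hC0 hC
    have hsa2 : Real.sqrt (1 + H ^ 2) ^ 2 = 1 + H ^ 2 := Real.sq_sqrt ha.le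
    have hsa : 0 < Real.sqrt (1 + H ^ 2) := Real.sqrt_pos.2 ha
    have hdisc : 0 ≤ C ^ 2 - 4 * C * H - 4 := by nlinarith
    have h1 : 1 - 4 * H / C - 4 / C ^ 2 = (C ^ 2 - 4 * C * H - 4) / C ^ 2 := by
      field_simp
    rw [h1, Real.sqrt_div hdisc, Real.sqrt_sq hC0.le]
    rw [div_div, div_eq_div_iff (by positivity) (by positivity)]
    ring
  have hin : Tendsto (fun C : ℝ => 1 - 4 * H / C - 4 / C ^ 2) atTop (nhds (1 - 0 - 0)) :=
    (tendsto_const_nhds.sub (Tendsto.div_atTop tendsto_const_nhds tendsto_id)).sub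
      (Tendsto.div_atTop tendsto_const_nhds (tendsto_pow_atTop two_ne_zero))
  have h2 : Tendsto (fun C : ℝ => Real.sqrt (1 - 4 * H / C - 4 / C ^ 2) / (2 * (1 + H ^ 2)))
      atTop (nhds (Real.sqrt (1 - 0 - 0) / (2 * (1 + H ^ 2)))) :=
    ((Real.continuous_sqrt.tendsto _).comp hin).div_const _
  have h3 : Real.sqrt (1 - 0 - 0 : ℝ) / (2 * (1 + H ^ 2)) = 1 / (2 * (1 + H ^ 2)) := by
    norm_num
  rw [h3] at h2
  exact h2.congr' heq

lemma aux_val (H s c r : ℝ) (hH : 0 < H) (hs : 0 < s) (hr : 0 < r) (hr2 : r ^ 2 = 1 + H ^ 2)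
    (hpy : s ^ 2 + c ^ 2 = 1) :
    (H * (s ^ 2 / (1 + H ^ 2))) / ((1 - s ^ 2 / (1 + H ^ 2)) * (s / r) * r)
      = H * s / (H ^ 2 + c ^ 2) := by
  have ha : (0:ℝ) < 1 + H ^ 2 := by positivity
  have h2 : (0:ℝ) < H ^ 2 + c ^ 2 := by positivity
  have hc : (1 : ℝ) - s ^ 2 / (1 + H ^ 2) = (H ^ 2 + c ^ 2) / (1 + H ^ 2) := by
    rw [eq_div_iff ha.ne']
    field_simp
    linarith
  rw [mul_assoc, div_mul_cancel₀ s hr.ne', hc]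
  rw [div_eq_div_iff (by positivity) h2.ne']
  field_simp

lemma itg_tendsto (H t : ℝ) (hH : 0 < H) (ht0 : 0 < t) (htpi : t ≤ Real.pi) :
    Tendsto (fun C => itg H C t) atTop
      (nhds (H * Real.sin (t / 2) / (H ^ 2 + Real.cos (t / 2) ^ 2))) := by
  have ha : (0:ℝ) < 1 + H ^ 2 := by positivity
  have hsa : 0 < Real.sqrt (1 + H ^ 2) := Real.sqrt_pos.2 ha
  have hsa2 : Real.sqrt (1 + H ^ 2) ^ 2 = 1 + H ^ 2 := Real.sq_sqrt ha.le
  have hs : 0 < Real.sin (t / 2) :=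
    Real.sin_pos_of_pos_of_lt_pi (by linarith) (by linarith [Real.pi_pos])
  have hct : Real.cos t = 1 - 2 * Real.sin (t / 2) ^ 2 := by
    have h2 := Real.cos_two_mul (t / 2)
    rw [show 2 * (t / 2) = t by ring] at h2
    linarith [Real.sin_sq_add_cos_sq (t / 2), h2]
  set d : ℝ := (1 - Real.cos t) / (2 * (1 + H ^ 2)) with hd_def
  have hd : d = Real.sin (t / 2) ^ 2 / (1 + H ^ 2) := by
    rw [hd_def, hct]; field_simp; ring
  have hd0 : 0 < d := by rw [hd]; positivity
  have hd1 : d < 1 := by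
    rw [hd, div_lt_one ha]
    nlinarith [Real.sin_sq_add_cos_sq (t / 2), sq_nonneg (Real.cos (t / 2))]
  have hsd : Real.sqrt d = Real.sin (t / 2) / Real.sqrt (1 + H ^ 2) := by
    rw [hd, Real.sqrt_div (sq_nonneg _), Real.sqrt_sq hs.le]
  -- numerator limit
  have hq1 := q1_tendsto H hH
  have hq2 := q2_tendsto H hH
  have hnum : Tendsto (fun C : ℝ => 1 / C
      + H * (-(Real.sqrt (C ^ 2 - 4 * C * H - 4) / (2 * C * (1 + H ^ 2))) * Real.cos t
        - (2 * H - C) / (2 * C * (1 + H ^ 2)))) atTop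
      (nhds (0 + H * (-(1 / (2 * (1 + H ^ 2))) * Real.cos t - -(1 / (2 * (1 + H ^ 2)))))) :=
    (Tendsto.div_atTop tendsto_const_nhds tendsto_id).add
      (((hq2.neg.mul_const (Real.cos t)).sub hq1).const_mul H)
  have hden : Tendsto (fun C : ℝ =>
      (1 + (2 * H - C) / (2 * C * (1 + H ^ 2))
        + Real.sqrt (C ^ 2 - 4 * C * H - 4) / (2 * C * (1 + H ^ 2)) * Real.cos t)
      * Real.sqrt (-(Real.sqrt (C ^ 2 - 4 * C * H - 4) / (2 * C * (1 + H ^ 2))) * Real.cos t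
        - (2 * H - C) / (2 * C * (1 + H ^ 2)))
      * Real.sqrt (1 + H ^ 2)) atTop
      (nhds ((1 + -(1 / (2 * (1 + H ^ 2))) + 1 / (2 * (1 + H ^ 2)) * Real.cos t)
        * Real.sqrt (-(1 / (2 * (1 + H ^ 2))) * Real.cos t - -(1 / (2 * (1 + H ^ 2))))
        * Real.sqrt (1 + H ^ 2))) := by
    refine Tendsto.mul_const _ (Tendsto.mul ?_ ?_)
    · exact (tendsto_const_nhds.add hq1).add (hq2.mul_const (Real.cos t))
    · exact (Real.continuous_sqrt.tendsto _).comp ((hq2.neg.mul_const (Real.cos t)).sub hq1)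
  have hDval : -(1 / (2 * (1 + H ^ 2))) * Real.cos t - -(1 / (2 * (1 + H ^ 2))) = d := by
    rw [hd_def]; ring
  have hLval : 1 + -(1 / (2 * (1 + H ^ 2))) + 1 / (2 * (1 + H ^ 2)) * Real.cos t = 1 - d := by
    rw [hd_def]; ring
  rw [hDval, hLval] at hden
  rw [hDval] at hnum
  have hdenne : (1 - d) * Real.sqrt d * Real.sqrt (1 + H ^ 2) ≠ 0 := by
    have h5 : 0 < Real.sqrt d := Real.sqrt_pos.2 hd0
    exact ne_of_gt (mul_pos (mul_pos (by linarith) h5) hsa)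
  have main := hnum.div hden hdenne
  have hval : (0 + H * d) / ((1 - d) * Real.sqrt d * Real.sqrt (1 + H ^ 2))
      = H * Real.sin (t / 2) / (H ^ 2 + Real.cos (t / 2) ^ 2) := by
    have hpy := Real.sin_sq_add_cos_sq (t / 2)
    have hden2 : (0:ℝ) < H ^ 2 + Real.cos (t / 2) ^ 2 := by positivity
    rw [hsd, hd, zero_add]
    exact aux_val H (Real.sin (t / 2)) (Real.cos (t / 2)) (Real.sqrt (1 + H ^ 2))
      hH hs hsa hsa2 hpy
  rw [hval] at main
  exact main


lemma flim_cont (H : ℝ) (hH : 0 < H) :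
    Continuous (fun t : ℝ => H * Real.sin (t / 2) / (H ^ 2 + Real.cos (t / 2) ^ 2)) := by
  apply Continuous.div
  · fun_prop
  · fun_prop
  · intro t
    have : (0:ℝ) < H ^ 2 + Real.cos (t / 2) ^ 2 := by positivity
    exact this.ne'

lemma integral_lim (H : ℝ) (hH : 0 < H) :
    (∫ t in (0:ℝ)..Real.pi, H * Real.sin (t / 2) / (H ^ 2 + Real.cos (t / 2) ^ 2))
      = Real.pi - 2 * Real.arctan H := by
  have hderiv : ∀ t ∈ Set.uIcc (0:ℝ) Real.pi,
      HasDerivAt (fun x : ℝ => -2 * Real.arctan (Real.cos (x / 2) / H))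
        (H * Real.sin (t / 2) / (H ^ 2 + Real.cos (t / 2) ^ 2)) t := by
    intro t _
    have h1 : HasDerivAt (fun x : ℝ => x / 2) (1 / 2) t := (hasDerivAt_id t).div_const 2
    have h2 : HasDerivAt (fun x : ℝ => Real.cos (x / 2)) (-Real.sin (t / 2) * (1 / 2)) t :=
      h1.cos
    have h3 : HasDerivAt (fun x : ℝ => Real.cos (x / 2) / H)
        (-Real.sin (t / 2) * (1 / 2) / H) t := h2.div_const H
    have h4 : HasDerivAt (fun x : ℝ => Real.arctan (Real.cos (x / 2) / H))
        (1 / (1 + (Real.cos (t / 2) / H) ^ 2) * (-Real.sin (t / 2) * (1 / 2) / H)) t :=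
      h3.arctan
    have h5 := h4.const_mul (-2 : ℝ)
    refine h5.congr_deriv ?_
    have hd : (0:ℝ) < H ^ 2 + Real.cos (t / 2) ^ 2 := by positivity
    have hH0 : H ≠ 0 := hH.ne'
    field_simp
  rw [intervalIntegral.integral_eq_sub_of_hasDerivAt hderiv
    ((flim_cont H hH).intervalIntegrable 0 Real.pi)]
  have e1 : Real.cos (Real.pi / 2) = 0 := Real.cos_pi_div_two
  have e2 : Real.cos (0 / 2 : ℝ) = 1 := by norm_num
  rw [e1, e2]
  rw [zero_div, Real.arctan_zero]
  rw [show (1:ℝ) / H = H⁻¹ by rw [one_div], Real.arctan_inv_of_pos hH]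
  ring

lemma itg_meas (H C : ℝ) : Measurable (fun t => itg H C t) := by
  unfold itg
  fun_prop

/-- For `H > 0`, the closed-form period integral `F C` tends to
`2 arccot H = π − 2 arctan H` as `C → ∞`. -/
theorem stmt_10 (H : ℝ) (hH : 0 < H) (F : ℝ → ℝ)
    (hF : ∀ C : ℝ, 2 * (H + Real.sqrt (1 + H ^ 2)) < C →
      F C = ∫ t in (0 : ℝ)..Real.pi,
        (1 / C + H * (-(Real.sqrt (C ^ 2 - 4 * C * H - 4) / (2 * C * (1 + H ^ 2))) * Real.cos t
          - (2 * H - C) / (2 * C * (1 + H ^ 2))))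
        / ((1 + (2 * H - C) / (2 * C * (1 + H ^ 2))
            + (Real.sqrt (C ^ 2 - 4 * C * H - 4) / (2 * C * (1 + H ^ 2))) * Real.cos t)
          * Real.sqrt (-(Real.sqrt (C ^ 2 - 4 * C * H - 4) / (2 * C * (1 + H ^ 2))) * Real.cos t
            - (2 * H - C) / (2 * C * (1 + H ^ 2)))
          * Real.sqrt (1 + H ^ 2))) :
    Filter.Tendsto F Filter.atTop (nhds (Real.pi - 2 * Real.arctan H)) := by
  have hF' : ∀ C : ℝ, 2 * (H + Real.sqrt (1 + H ^ 2)) < C →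
      F C = ∫ t in (0 : ℝ)..Real.pi, itg H C t := hF
  have hT : Tendsto (fun C => ∫ t in (0:ℝ)..Real.pi, itg H C t) atTop
      (nhds (∫ t in (0:ℝ)..Real.pi,
        H * Real.sin (t / 2) / (H ^ 2 + Real.cos (t / 2) ^ 2))) := by
    apply intervalIntegral.tendsto_integral_filter_of_dominated_convergence
      (bound := fun _ => Real.sqrt (1 + H ^ 2) / H ^ 2 + 1 / H)
    · exact Eventually.of_forall fun C => ((itg_meas H C).aestronglyMeasurable)
    · filter_upwards [eventually_gt_atTop (2 * (H + Real.sqrt (1 + H ^ 2)))] with C hC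
      exact ae_of_all _ fun t _ => by
        rw [Real.norm_eq_abs]; exact itg_bound H C t hH hC
    · exact intervalIntegrable_const
    · refine ae_of_all _ fun t ht => ?_
      rw [Set.uIoc_of_le Real.pi_pos.le] at ht
      exact itg_tendsto H t hH ht.1 ht.2
  rw [integral_lim H hH] at hT
  apply hT.congr'
  filter_upwards [eventually_gt_atTop (2 * (H + Real.sqrt (1 + H ^ 2)))] with C hC
  exact (hF' C hC).symm
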